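/- Let m, k ≥ 1, let φ : ℝᵐ → ℝ be convex, and let M be a k×m real matrix whose associated linear map is injective (equivalently, Mᵀ M is positive definite). Define the convex conjugate φ* : ℝᵐ → ℝ ∪ {+∞} by φ*(s) = sup over t ∈ ℝᵐ of ( ⟨s, t⟩ − φ(t) ). Then for every u ∈ ℝᵐ, the infimum over y ∈ ℝᵐ of ( (1/2)‖M y‖₂² + φ*(Mᵀ M (u − y)) ), taken in ℝ ∪ {+∞}, equals (1/2)‖M u‖₂² − inf over t ∈ ℝᵐ of ( φ(t) + (1/2)‖M(u − t)‖₂² ). (This identity underlies the convex reformulation of the CNC problem with a dual variable y.) -/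

import Mathlib

open Matrix

open Filter

lemma keyalg0 {k : ℕ} (a b c : Fin k → ℝ) :
    1/2 * ∑ j, b j ^ 2 + ∑ j, (a j - b j) * c j
      = (1/2 * ∑ j, a j ^ 2 - 1/2 * ∑ j, (a j - c j) ^ 2) + 1/2 * ∑ j, (b j - c j) ^ 2 := by
  simp only [Finset.mul_sum, ← Finset.sum_add_distrib, ← Finset.sum_sub_distrib]
  exact Finset.sum_congr rfl fun j _ => by ring

lemma quadexp {k : ℕ} (a d : Fin k → ℝ) (l : ℝ) :
    1/2 * ∑ j, (a j - l * d j) ^ 2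
      = 1/2 * ∑ j, a j ^ 2 - l * ∑ j, a j * d j + l^2 * (1/2 * ∑ j, d j ^ 2) := by
  simp only [Finset.mul_sum, ← Finset.sum_add_distrib, ← Finset.sum_sub_distrib]
  exact Finset.sum_congr rfl fun j _ => by ring

lemma normsq_le_sum {m : ℕ} (x : Fin m → ℝ) : ‖x‖ ^ 2 ≤ ∑ i, x i ^ 2 := by
  have h : ‖x‖ ≤ Real.sqrt (∑ i, x i ^ 2) := by
    rw [pi_norm_le_iff_of_nonneg (Real.sqrt_nonneg _)]
    intro i
    rw [Real.norm_eq_abs, ← Real.sqrt_sq_eq_abs]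
    exact Real.sqrt_le_sqrt (Finset.single_le_sum (f := fun i => x i ^ 2)
      (fun _ _ => sq_nonneg _) (Finset.mem_univ i))
  calc ‖x‖ ^ 2 ≤ Real.sqrt (∑ i, x i ^ 2) ^ 2 := pow_le_pow_left₀ (norm_nonneg x) h 2
    _ = ∑ i, x i ^ 2 := Real.sq_sqrt (Finset.sum_nonneg fun _ _ => sq_nonneg _)

lemma hdot {m k : ℕ} (M : Matrix (Fin k) (Fin m) ℝ) (a b : Fin m → ℝ) :
    ∑ i, (Mᵀ * M).mulVec a i * b i = ∑ j, M.mulVec a j * M.mulVec b j := by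
  show ((Mᵀ * M).mulVec a) ⬝ᵥ b = (M.mulVec a) ⬝ᵥ (M.mulVec b)
  rw [← Matrix.mulVec_mulVec, Matrix.mulVec_transpose, ← Matrix.dotProduct_mulVec]


set_option maxHeartbeats 1000000

/-- Duality identity behind the convex CNC reformulation: for `φ : ℝᵐ → ℝ` convex and
`M` injective, for every `u`,
`inf_y ( (1/2)‖My‖₂² + φ*(MᵀM(u - y)) ) = (1/2)‖Mu‖₂² - inf_t ( φ(t) + (1/2)‖M(u-t)‖₂² )`,
where `φ*(s) = sup_t ( ⟨s, t⟩ - φ(t) )` is the convex conjugate (with values in `ℝ ∪ {+∞}`,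
modeled in `EReal`). -/
theorem stmt8 (m k : ℕ) (hm : 1 ≤ m) (hk : 1 ≤ k)
    (φ : (Fin m → ℝ) → ℝ) (hφconv : ConvexOn ℝ Set.univ φ)
    (M : Matrix (Fin k) (Fin m) ℝ)
    (hM : Function.Injective fun x : Fin m → ℝ => M.mulVec x)
    (u : Fin m → ℝ) :
    (⨅ y : Fin m → ℝ,
      (((1 / 2 * ∑ j, M.mulVec y j ^ 2 : ℝ) : EReal) +
        ⨆ t : Fin m → ℝ,
          (((∑ i, (Mᵀ * M).mulVec (u - y) i * t i) - φ t : ℝ) : EReal)))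
    = ((1 / 2 * ∑ j, M.mulVec u j ^ 2
        - sInf (Set.range fun t : Fin m → ℝ =>
            φ t + 1 / 2 * ∑ j, M.mulVec (u - t) j ^ 2) : ℝ) : EReal) := by
  have hmne : Nonempty (Fin m) := ⟨⟨0, hm⟩⟩
  -- abbreviations
  set Q : (Fin m → ℝ) → ℝ := fun x => 1/2 * ∑ j, M.mulVec x j ^ 2 with hQ
  set g : (Fin m → ℝ) → ℝ := fun t => φ t + Q (u - t) with hg
  -- continuity of φ
  have hφcont : Continuous φ := by
    rw [← continuousOn_univ]
    exact hφconv.continuousOn isOpen_univ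
  -- continuity of mulVec coordinates and Q
  have hvcont : ∀ j, Continuous fun x : Fin m → ℝ => M.mulVec x j := by
    intro j
    simpa [Matrix.mulVec, dotProduct] using
      continuous_finset_sum Finset.univ fun i _ => continuous_const.mul (continuous_apply i)
  have hQcont : Continuous Q :=
    continuous_const.mul (continuous_finset_sum Finset.univ fun j _ => (hvcont j).pow 2)
  have hgcont : Continuous g := hφcont.add (hQcont.comp (continuous_const.sub continuous_id))
  -- quadratic lower bound from injectivity
  have hc : ∃ c : ℝ, 0 < c ∧ ∀ x : Fin m → ℝ, c * ‖x‖ ^ 2 ≤ ∑ j, M.mulVec x j ^ 2 := by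
    have hSne : (Metric.sphere (0 : Fin m → ℝ) 1).Nonempty := by
      refine ⟨fun _ => 1, ?_⟩
      simp [mem_sphere_zero_iff_norm, pi_norm_const]
    obtain ⟨x0, hx0S, hx0min⟩ := (isCompact_sphere (0 : Fin m → ℝ) 1).exists_isMinOn hSne
      (continuous_finset_sum Finset.univ fun j _ => (hvcont j).pow 2).continuousOn
    have hx0norm : ‖x0‖ = 1 := mem_sphere_zero_iff_norm.mp hx0S
    refine ⟨∑ j, M.mulVec x0 j ^ 2, ?_, ?_⟩
    · have hx0ne : x0 ≠ 0 := by
        intro h; rw [h] at hx0norm; simp at hx0norm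
      have hMx0 : M.mulVec x0 ≠ 0 := by
        intro h
        exact hx0ne (hM (show M.mulVec x0 = M.mulVec 0 by simp [h]))
      obtain ⟨j, hj⟩ : ∃ j, M.mulVec x0 j ≠ 0 := by
        by_contra hall; push_neg at hall; exact hMx0 (funext hall)
      calc (0:ℝ) < M.mulVec x0 j ^ 2 := by positivity
        _ ≤ ∑ j, M.mulVec x0 j ^ 2 :=
            Finset.single_le_sum (f := fun j => M.mulVec x0 j ^ 2)
              (fun _ _ => sq_nonneg _) (Finset.mem_univ j)
    · intro x
      rcases eq_or_ne x 0 with rfl | hx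
      · simp [Matrix.mulVec_zero]
      · have hr0 : (0:ℝ) < ‖x‖ := norm_pos_iff.mpr hx
        have hxu : ‖(‖x‖⁻¹ • x)‖ = 1 := by
          rw [norm_smul, Real.norm_eq_abs, abs_inv, abs_of_pos hr0]
          field_simp
        have hmin : (∑ j, M.mulVec x0 j ^ 2) ≤ ∑ j, M.mulVec (‖x‖⁻¹ • x) j ^ 2 :=
          hx0min (mem_sphere_zero_iff_norm.mpr hxu)
        have hqscale : ∑ j, M.mulVec (‖x‖⁻¹ • x) j ^ 2 = (‖x‖⁻¹)^2 * ∑ j, M.mulVec x j ^ 2 := by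
          simp [Matrix.mulVec_smul, Finset.mul_sum, mul_pow]
        rw [hqscale] at hmin
        have hinv : (‖x‖⁻¹)^2 * ‖x‖^2 = 1 := by field_simp
        calc (∑ j, M.mulVec x0 j ^ 2) * ‖x‖ ^ 2
            ≤ ((‖x‖⁻¹)^2 * ∑ j, M.mulVec x j ^ 2) * ‖x‖ ^ 2 :=
              mul_le_mul_of_nonneg_right hmin (sq_nonneg _)
          _ = (∑ j, M.mulVec x j ^ 2) * ((‖x‖⁻¹)^2 * ‖x‖^2) := by ring
          _ = ∑ j, M.mulVec x j ^ 2 := by rw [hinv, mul_one]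
  -- linear lower bound on φ
  have hC : ∃ C : ℝ, 0 ≤ C ∧ ∀ t : Fin m → ℝ, -(2*C) * (1 + ‖t‖) ≤ φ t := by
    obtain ⟨C, hCb⟩ := (isCompact_closedBall (0 : Fin m → ℝ) 1).exists_bound_of_continuousOn
      hφcont.continuousOn
    have h0mem : (0 : Fin m → ℝ) ∈ Metric.closedBall (0 : Fin m → ℝ) 1 := by simp
    have hC0 : 0 ≤ C := le_trans (norm_nonneg _) (hCb 0 h0mem)
    have hφ0 : |φ 0| ≤ C := hCb 0 h0mem
    refine ⟨C, hC0, fun t => ?_⟩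
    by_cases ht : ‖t‖ ≤ 1
    · have := hCb t (by simpa [Metric.mem_closedBall, dist_zero_right] using ht)
      rw [Real.norm_eq_abs, abs_le] at this
      nlinarith [norm_nonneg t, mul_nonneg hC0 (norm_nonneg t)]
    · push_neg at ht
      have hr0 : (0:ℝ) < ‖t‖ := lt_trans one_pos ht
      have hp : ‖(‖t‖⁻¹ • t)‖ = 1 := by
        rw [norm_smul, Real.norm_eq_abs, abs_inv, abs_of_pos hr0]; field_simp
      have hpmem : (‖t‖⁻¹ • t) ∈ Metric.closedBall (0 : Fin m → ℝ) 1 := by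
        simp [Metric.mem_closedBall, dist_zero_right, hp]
      have hφp : |φ (‖t‖⁻¹ • t)| ≤ C := by simpa [Real.norm_eq_abs] using hCb _ hpmem
      have hinvle : ‖t‖⁻¹ ≤ 1 := by
        rw [inv_le_one_iff₀]; right; exact le_of_lt ht
      have hconv := hφconv.2 (Set.mem_univ t) (Set.mem_univ (0 : Fin m → ℝ))
        (le_of_lt (inv_pos.mpr hr0)) (by linarith : (0:ℝ) ≤ 1 - ‖t‖⁻¹)
        (by ring : ‖t‖⁻¹ + (1 - ‖t‖⁻¹) = 1)
      rw [smul_zero, add_zero] at hconv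
      simp only [smul_eq_mul] at hconv
      -- hconv : φ (‖t‖⁻¹ • t) ≤ ‖t‖⁻¹ * φ t + (1 - ‖t‖⁻¹) * φ 0
      rw [abs_le] at hφp hφ0
      have hrr2 : ‖t‖ * ‖t‖⁻¹ = 1 := mul_inv_cancel₀ (ne_of_gt hr0)
      have h1 : ‖t‖ * φ (‖t‖⁻¹ • t) ≤ φ t + (‖t‖ - 1) * φ 0 := by
        have h := mul_le_mul_of_nonneg_left hconv (le_of_lt hr0)
        have e : ‖t‖ * (‖t‖⁻¹ * φ t + (1 - ‖t‖⁻¹) * φ 0)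
            = (‖t‖ * ‖t‖⁻¹) * φ t + (‖t‖ - ‖t‖ * ‖t‖⁻¹) * φ 0 := by ring
        rw [e, hrr2] at h
        simpa using h
      have hA := mul_le_mul_of_nonneg_left hφp.1 (le_of_lt hr0)
      have hB := mul_le_mul_of_nonneg_left hφ0.2 (by linarith : (0:ℝ) ≤ ‖t‖ - 1)
      nlinarith [h1, hA, hB, hC0, norm_nonneg t]
  obtain ⟨c, hc0, hcq⟩ := hc
  obtain ⟨C, hC0, hCb⟩ := hC
  -- coercivity of g
  have hcoer : Tendsto g (cocompact _) atTop := by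
    set p : ℝ → ℝ := fun r => c/2 * (r - ‖u‖)^2 - (2*C) * (1 + r) with hp
    have hpeq : p = fun r => r * (c/2 * r - (c * ‖u‖ + 2*C)) + (c/2 * ‖u‖^2 - 2*C) := by
      funext r; simp only [hp]; ring
    have hptop : Tendsto p atTop atTop := by
      rw [hpeq]
      apply tendsto_atTop_add_const_right
      exact tendsto_id.atTop_mul_atTop₀
        (tendsto_atTop_add_const_right _ _ (Tendsto.const_mul_atTop (by positivity) tendsto_id))
    refine tendsto_atTop_mono ?_ (hptop.comp tendsto_norm_cocompact_atTop)
    intro t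
    have hsq : (‖t‖ - ‖u‖)^2 ≤ ‖u - t‖^2 := by
      have h1 : ‖t‖ - ‖u‖ ≤ ‖u - t‖ := by
        have := norm_sub_norm_le t u
        rwa [norm_sub_rev t u] at this
      have h2 : -‖u - t‖ ≤ ‖t‖ - ‖u‖ := by
        have := norm_sub_norm_le u t
        linarith
      exact sq_le_sq' h2 h1
    have hq := hcq (u - t)
    have hφb := hCb t
    show p ‖t‖ ≤ g t
    simp only [hp, hg, hQ]
    nlinarith [mul_le_mul_of_nonneg_left hsq (le_of_lt hc0)]
  obtain ⟨th, hth⟩ := hgcont.exists_forall_le hcoer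
  -- subgradient inequality at th
  have hsub : ∀ t, ∑ j, M.mulVec (u - th) j * M.mulVec (t - th) j ≤ φ t - φ th := by
    intro t
    set d : Fin m → ℝ := t - th with hd
    set S : ℝ := ∑ j, M.mulVec (u - th) j * M.mulVec d j with hS
    set B : ℝ := Q d with hB
    have hB0 : (0:ℝ) ≤ B := by
      rw [hB, hQ]; positivity
    have key : ∀ ε : ℝ, 0 < ε → (0:ℝ) ≤ (φ t - φ th - S) + ε := by
      intro ε hε
      set l : ℝ := min 1 (ε / (B + 1)) with hl
      have hl0 : 0 < l := lt_min one_pos (div_pos hε (by linarith))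
      have hl1 : l ≤ 1 := min_le_left _ _
      have hlB : l * B ≤ ε := by
        calc l * B ≤ (ε / (B + 1)) * B :=
              mul_le_mul_of_nonneg_right (min_le_right _ _) hB0
          _ ≤ (ε / (B + 1)) * (B + 1) :=
              mul_le_mul_of_nonneg_left (by linarith) (le_of_lt (div_pos hε (by linarith)))
          _ = ε := div_mul_cancel₀ _ (by linarith)
      have hpt : (1 - l) • th + l • t = th + l • d := by
        ext i; simp [hd, Pi.smul_apply, smul_eq_mul]; ring
      have hcv := hφconv.2 (Set.mem_univ th) (Set.mem_univ t)
        (by linarith : (0:ℝ) ≤ 1 - l) (le_of_lt hl0) (by ring : (1 - l) + l = 1)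
      simp only [smul_eq_mul] at hcv
      rw [hpt] at hcv
      have hvec : u - (th + l • d) = (u - th) - l • d := by
        ext i; simp; ring
      have hcoord : ∀ j, M.mulVec ((u - th) - l • d) j
          = M.mulVec (u - th) j - l * M.mulVec d j := by
        intro j
        rw [Matrix.mulVec_sub, Matrix.mulVec_smul]
        simp
      have hQexp : Q ((u - th) - l • d) = Q (u - th) - l * S + l^2 * B := by
        rw [hB, hS]
        simp only [hQ]
        rw [show ∑ j, M.mulVec ((u - th) - l • d) j ^ 2
            = ∑ j, (M.mulVec (u - th) j - l * M.mulVec d j) ^ 2 from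
          Finset.sum_congr rfl fun j _ => by rw [hcoord j]]
        exact quadexp _ _ l
      have hmin : g th ≤ g (th + l • d) := hth _
      simp only [hg] at hmin
      rw [hvec, hQexp] at hmin
      have hchain : φ th + Q (u - th) ≤ (1 - l) * φ th + l * φ t + (Q (u - th) - l * S + l^2 * B) := by
        linarith [hcv, hmin]
      have h2 : 0 ≤ l * ((φ t - φ th - S) + l * B) := by nlinarith [hchain]
      have h3 : 0 ≤ (φ t - φ th - S) + l * B := nonneg_of_mul_nonneg_right h2 hl0
      linarith
    have h0 : (0:ℝ) ≤ φ t - φ th - S := by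
      by_contra h
      push_neg at h
      have := key (-(φ t - φ th - S)/2) (by linarith)
      linarith
    linarith [h0]
  -- strong minimality
  have hstrong : ∀ t, g th + Q (th - t) ≤ g t := by
    intro t
    have hs := hsub t
    have hcoord : ∀ j, M.mulVec (u - t) j = M.mulVec (u - th) j - 1 * M.mulVec (t - th) j := by
      intro j
      rw [Matrix.mulVec_sub, Matrix.mulVec_sub, Matrix.mulVec_sub]
      simp
    have hQexp : Q (u - t) = Q (u - th) - 1 * ∑ j, M.mulVec (u - th) j * M.mulVec (t - th) j
        + 1^2 * Q (t - th) := by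
      simp only [hQ]
      rw [show ∑ j, M.mulVec (u - t) j ^ 2
          = ∑ j, (M.mulVec (u - th) j - 1 * M.mulVec (t - th) j) ^ 2 from
        Finset.sum_congr rfl fun j _ => by rw [hcoord j]]
      exact quadexp _ _ 1
    have hQsym : Q (th - t) = Q (t - th) := by
      simp only [hQ]
      congr 1
      refine Finset.sum_congr rfl fun j _ => ?_
      rw [← neg_sub t th, Matrix.mulVec_neg]
      simp [neg_sq]
    simp only [hg]
    rw [hQexp, hQsym]
    linarith [hs]
  -- infimum value
  have hinf : sInf (Set.range fun t : Fin m → ℝ =>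
      φ t + 1 / 2 * ∑ j, M.mulVec (u - t) j ^ 2) = g th := by
    refine IsLeast.csInf_eq ⟨⟨th, rfl⟩, ?_⟩
    rintro x ⟨t, rfl⟩
    exact hth t
  -- key identity
  have hkey : ∀ y t : Fin m → ℝ,
      Q y + ((∑ i, (Mᵀ * M).mulVec (u - y) i * t i) - φ t)
        = (Q u - g t) + Q (y - t) := by
    intro y t
    rw [hdot M (u - y) t]
    simp only [hg, hQ]
    have e1 : ∑ j, M.mulVec (u - y) j * M.mulVec t j
        = ∑ j, (M.mulVec u j - M.mulVec y j) * M.mulVec t j :=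
      Finset.sum_congr rfl fun j _ => by rw [Matrix.mulVec_sub]; rfl
    have e2 : ∑ j, M.mulVec (u - t) j ^ 2 = ∑ j, (M.mulVec u j - M.mulVec t j) ^ 2 :=
      Finset.sum_congr rfl fun j _ => by rw [Matrix.mulVec_sub]; rfl
    have e3 : ∑ j, M.mulVec (y - t) j ^ 2 = ∑ j, (M.mulVec y j - M.mulVec t j) ^ 2 :=
      Finset.sum_congr rfl fun j _ => by rw [Matrix.mulVec_sub]; rfl
    rw [e1, e2, e3]
    have hk := keyalg0 (M.mulVec u) (M.mulVec y) (M.mulVec t)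
    linarith [hk]
  rw [hinf]
  have hQth : Q th = 1 / 2 * ∑ j, M.mulVec th j ^ 2 := by simp only [hQ]
  have hQu : Q u = 1 / 2 * ∑ j, M.mulVec u j ^ 2 := by simp only [hQ]
  have hQ0 : Q (th - th) = 0 := by simp [hQ]
  apply le_antisymm
  · refine iInf_le_of_le th ?_
    have hsup : (⨆ t : Fin m → ℝ, (((∑ i, (Mᵀ * M).mulVec (u - th) i * t i) - φ t : ℝ) : EReal))
        ≤ (((∑ i, (Mᵀ * M).mulVec (u - th) i * th i) - φ th : ℝ) : EReal) := by
      refine iSup_le fun t => ?_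
      rw [EReal.coe_le_coe_iff]
      have h1 := hkey th t
      have h2 := hkey th th
      have h3 := hstrong t
      linarith [h1, h2, h3, hQ0]
    calc ((1 / 2 * ∑ j, M.mulVec th j ^ 2 : ℝ) : EReal)
          + (⨆ t : Fin m → ℝ, (((∑ i, (Mᵀ * M).mulVec (u - th) i * t i) - φ t : ℝ) : EReal))
        ≤ ((1 / 2 * ∑ j, M.mulVec th j ^ 2 : ℝ) : EReal)
          + (((∑ i, (Mᵀ * M).mulVec (u - th) i * th i) - φ th : ℝ) : EReal) :=
          add_le_add_right hsup _
      _ = ((1 / 2 * ∑ j, M.mulVec th j ^ 2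
          + ((∑ i, (Mᵀ * M).mulVec (u - th) i * th i) - φ th) : ℝ) : EReal) :=
          (EReal.coe_add _ _).symm
      _ ≤ ((1 / 2 * ∑ j, M.mulVec u j ^ 2 - g th : ℝ) : EReal) := by
          rw [EReal.coe_le_coe_iff, ← hQth, ← hQu]
          have h2 := hkey th th
          linarith [h2, hQ0]
  · refine le_iInf fun y => ?_
    have hle : (((∑ i, (Mᵀ * M).mulVec (u - y) i * th i) - φ th : ℝ) : EReal)
        ≤ ⨆ t : Fin m → ℝ, (((∑ i, (Mᵀ * M).mulVec (u - y) i * t i) - φ t : ℝ) : EReal) :=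
      le_iSup (fun t : Fin m → ℝ =>
        (((∑ i, (Mᵀ * M).mulVec (u - y) i * t i) - φ t : ℝ) : EReal)) th
    have h1 := hkey y th
    have hQynn : 0 ≤ Q (y - th) := by simp only [hQ]; positivity
    have hQy : Q y = 1 / 2 * ∑ j, M.mulVec y j ^ 2 := by simp only [hQ]
    calc ((1 / 2 * ∑ j, M.mulVec u j ^ 2 - g th : ℝ) : EReal)
        ≤ ((1 / 2 * ∑ j, M.mulVec y j ^ 2
            + ((∑ i, (Mᵀ * M).mulVec (u - y) i * th i) - φ th) : ℝ) : EReal) := by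
          rw [EReal.coe_le_coe_iff, ← hQy, ← hQu]
          linarith [h1, hQynn]
      _ = ((1 / 2 * ∑ j, M.mulVec y j ^ 2 : ℝ) : EReal)
          + (((∑ i, (Mᵀ * M).mulVec (u - y) i * th i) - φ th : ℝ) : EReal) :=
          EReal.coe_add _ _
      _ ≤ ((1 / 2 * ∑ j, M.mulVec y j ^ 2 : ℝ) : EReal)
          + ⨆ t : Fin m → ℝ, (((∑ i, (Mᵀ * M).mulVec (u - y) i * t i) - φ t : ℝ) : EReal) :=
          add_le_add_right hle _
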